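/- Let A be a Banach algebra and φ a non-zero multiplicative linear functional on A. If there exists a bounded left A-module morphism θ : A/ker(φ) → A** satisfying φ̃(θ(a + ker φ)) = φ(a) for all a ∈ A, then A is left φ-amenable; explicitly, for any a₀ ∈ A with φ(a₀) = 1, the element m = θ(a₀ + ker φ) satisfies a·m = φ(a)m for all a ∈ A and φ̃(m) = 1 (this is Step 3 of the proof of Lemma 2.1). -/

import Mathlib

/-!
We realize the bidual `(B ⊗_p B)**` of the projective tensor product of a Banach algebra `B`
with itself canonically as the dual of the Banach space `B →L[ℂ] B* ` of bounded bilinear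
forms on `B` (the latter being isometrically isomorphic to `(B ⊗_p B)*`).  All the canonical
Banach `B`-bimodule actions are spelled out explicitly through this identification.
The multiplication of the Banach algebra `B` is encoded as a bounded bilinear map
`μ : B →L[ℂ] B →L[ℂ] B` (for a Banach algebra `A`, `μ = ContinuousLinearMap.mul ℂ A`).
-/

noncomputable section

open ContinuousLinearMap NormedSpace

/-- The space of bounded bilinear forms on `B`, canonically the dual of the projective
tensor product `B ⊗_p B`. -/
abbrev BilForm (B : Type*) [NormedAddCommGroup B] [NormedSpace ℂ B] : Type _ :=
  B →L[ℂ] StrongDual ℂ B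

instance BilForm.instAddCommGroup (B : Type*) [NormedAddCommGroup B] [NormedSpace ℂ B] :
    AddCommGroup (BilForm B) :=
  inferInstance

/-- The bidual of the projective tensor product `B ⊗_p B`, realized canonically as the dual of
the Banach space of bounded bilinear forms on `B`. -/
abbrev TensorBidual (B : Type*) [NormedAddCommGroup B] [NormedSpace ℂ B] : Type _ :=
  StrongDual ℂ (BilForm B)

/-- The bidual `B**` of a normed space `B`. -/
abbrev Bidual (B : Type*) [NormedAddCommGroup B] [NormedSpace ℂ B] : Type _ :=
  StrongDual ℂ (StrongDual ℂ B)

variable {B : Type*} [NormedAddCommGroup B] [NormedSpace ℂ B]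

/-- The left action of `a ∈ B` (with multiplication `μ`) on `(B ⊗_p B)**`:
`(a • T) β = T ((x, y) ↦ β (a x, y))`, the canonical bidual extension of the
`B`-bimodule action `a • (x ⊗ y) = (a x) ⊗ y` on `B ⊗_p B`. -/
def tensorLSmul (μ : B →L[ℂ] B →L[ℂ] B) (a : B) (T : TensorBidual B) : TensorBidual B :=
  T.comp ((compL ℂ B B (StrongDual ℂ B)).flip (μ a))

/-- The right action of `a ∈ B` on `(B ⊗_p B)**`:
`(T • a) β = T ((x, y) ↦ β (x, y a))`, the canonical bidual extension of the
`B`-bimodule action `(x ⊗ y) • a = x ⊗ (y a)` on `B ⊗_p B`. -/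
def tensorRSmul (μ : B →L[ℂ] B →L[ℂ] B) (T : TensorBidual B) (a : B) : TensorBidual B :=
  T.comp (compL ℂ B (StrongDual ℂ B) (StrongDual ℂ B) ((compL ℂ B B ℂ).flip (μ.flip a)))

/-- `π_B^* ψ`, the image of a functional `ψ ∈ B*` under the adjoint of the product
morphism `π_B : B ⊗_p B → B`; as a bilinear form it is `(x, y) ↦ ψ (x y)`.  Thus
`π_B** T ψ = T (piDual μ ψ)` for `T ∈ (B ⊗_p B)**`. -/
def piDual (μ : B →L[ℂ] B →L[ℂ] B) (ψ : StrongDual ℂ B) : BilForm B :=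
  (compL ℂ B B ℂ ψ).comp μ

/-- The left action of `a ∈ B` on the bidual `B**`: `(a • m) f = m (f ∘ (a * ·))`. -/
def bidualLSmul (μ : B →L[ℂ] B →L[ℂ] B) (a : B) (m : Bidual B) : Bidual B :=
  m.comp ((compL ℂ B B ℂ).flip (μ a))

/-- A Banach algebra `B` (with multiplication `μ` and a multiplicative functional `ψ`) is
*left `ψ`-biflat* if there is a bounded linear map `ρ : B → (B ⊗_p B)**` with
`ρ (a b) = ψ (b) ρ (a) = a • ρ (b)` for all `a, b ∈ B`, and `ψ̃ ∘ π_B** ∘ ρ = ψ`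
(note `(ψ̃ ∘ π_B**) T = T (piDual μ ψ)`). -/
def IsLeftBiflat (μ : B →L[ℂ] B →L[ℂ] B) (ψ : StrongDual ℂ B) : Prop :=
  ∃ ρ : B →L[ℂ] TensorBidual B,
    (∀ a b : B, ρ (μ a b) = ψ b • ρ a ∧ ρ (μ a b) = tensorLSmul μ a (ρ b)) ∧
    ∀ a : B, ρ a (piDual μ ψ) = ψ a

/-- A Banach algebra `B` is *left `ψ`-amenable* if there is `m ∈ B**` with
`a • m = ψ (a) m` for all `a ∈ B` and `ψ̃ (m) = m (ψ) = 1`. -/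
def IsLeftAmenable (μ : B →L[ℂ] B →L[ℂ] B) (ψ : StrongDual ℂ B) : Prop :=
  ∃ m : Bidual B, (∀ (a : B) (f : StrongDual ℂ B), m (f.comp (μ a)) = ψ a * m f) ∧ m ψ = 1

variable {A : Type*} [NonUnitalNormedRing A] [NormedSpace ℂ A]
  [IsScalarTower ℂ A A] [SMulCommClass ℂ A A] [CompleteSpace A]

/-- Step 3 of the proof of Lemma 2.1: if there is a bounded left
`A`-module morphism `θ : A ⧸ ker φ → A**` with `φ̃ (θ (a + ker φ)) = φ (a)` for all `a`,
then `A` is left `φ`-amenable; explicitly, for any `a₀ ∈ A` with `φ (a₀) = 1`, the element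
`m = θ (a₀ + ker φ)` satisfies `a • m = φ (a) m` for all `a ∈ A` and `φ̃ (m) = 1`. -/
theorem left_phi_amenable_of_module_morphism
    (φ : A →L[ℂ] ℂ) (hφ_ne : φ ≠ 0)
    (hφ_mul : ∀ a b : A, φ (a * b) = φ a * φ b)
    (θ : (A ⧸ LinearMap.ker (φ : A →ₗ[ℂ] ℂ)) →L[ℂ] Bidual A)
    (hθ_mod : ∀ a b : A, θ (Submodule.Quotient.mk (a * b)) =
      bidualLSmul (ContinuousLinearMap.mul ℂ A) a (θ (Submodule.Quotient.mk b)))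
    (hθ_val : ∀ a : A, θ (Submodule.Quotient.mk a) φ = φ a) :
    IsLeftAmenable (ContinuousLinearMap.mul ℂ A) φ ∧
    ∀ a₀ : A, φ a₀ = 1 →
      (∀ a : A, bidualLSmul (ContinuousLinearMap.mul ℂ A) a (θ (Submodule.Quotient.mk a₀)) =
        φ a • θ (Submodule.Quotient.mk a₀)) ∧
      θ (Submodule.Quotient.mk a₀) φ = 1 := by
  have key : ∀ a₀ : A, φ a₀ = 1 → ∀ a : A,
      bidualLSmul (ContinuousLinearMap.mul ℂ A) a (θ (Submodule.Quotient.mk a₀)) =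
        φ a • θ (Submodule.Quotient.mk a₀) := by
    intro a₀ h1 a
    rw [← hθ_mod a a₀]
    have hq : (Submodule.Quotient.mk (a * a₀) : A ⧸ LinearMap.ker (φ : A →ₗ[ℂ] ℂ)) =
        φ a • Submodule.Quotient.mk a₀ := by
      rw [← Submodule.Quotient.mk_smul, Submodule.Quotient.eq]
      simp [LinearMap.mem_ker, hφ_mul, h1]
    rw [hq, map_smul]
  obtain ⟨x, hx⟩ := DFunLike.ne_iff.mp hφ_ne
  set a₀ : A := (φ x)⁻¹ • x with ha₀
  have h1 : φ a₀ = 1 := by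
    simp only [ha₀, map_smul, smul_eq_mul]
    simp only [ContinuousLinearMap.zero_apply] at hx
    field_simp
  refine ⟨⟨θ (Submodule.Quotient.mk a₀), fun a f => ?_, by rw [hθ_val a₀, h1]⟩,
    fun b hb => ⟨key b hb, by rw [hθ_val b, hb]⟩⟩
  have := congrArg (fun m : Bidual A => m f) (key a₀ h1 a)
  simpa [bidualLSmul, compL, smul_eq_mul] using this
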